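/- Let (P_n)_{n≥0} be polynomials in two commuting variables, P_n(x,t) ∈ ℂ[x,t], such that each P_n is monic of degree n as a polynomial in x and P_0 = 1. In the ring ℂ[X,Y,S,T][[z]] define H_1 = Σ_{n≥0} P_n(X,S) z^n, H_2 = Σ_{n≥0} P_n(Y,T) z^n, H_3 = Σ_{n≥0} P_n(X+Y, S+T) z^n; each is invertible since its constant z-coefficient is 1. If H_3^{−1} = H_1^{−1} + H_2^{−1} − 1, then there exist formal power series u, f over ℂ with u(0) = 0, u'(0) = 1, f(0) = 0 such that (1 + f(z)·t − u(z)·x) · Σ_{n≥0} P_n(x,t) z^n = 1 in ℂ[x,t][[z]]; that is, the generating function equals 1/(1 + t f(z) − x u(z)), the form of an (algebraic) free Sheffer system. -/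

import Mathlib

/-- Evaluation `p(W, V)` of `p ∈ ℂ[x,t]` (with `x` the outer and `t` the inner variable)
at elements `W`, `V` of a commutative ℂ-algebra. -/
noncomputable def ev2 {R : Type*} [CommRing R] [Algebra ℂ R] (W V : R)
    (p : Polynomial (Polynomial ℂ)) : R :=
  Polynomial.eval₂ (Polynomial.aeval V : Polynomial ℂ →ₐ[ℂ] R).toRingHom W p

open Polynomial


lemma ringInverse_eq_of_mul_eq_one {M₀ : Type*} [CommMonoidWithZero M₀] {a b : M₀}
    (h : a * b = 1) : Ring.inverse a = b := by
  obtain ⟨u, rfl⟩ := IsUnit.of_mul_eq_one b h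
  rw [Ring.inverse_unit]
  exact Units.inv_eq_of_mul_eq_one_right h

/-- An additive polynomial over ℂ is linear. -/
lemma additive_poly_linear (q : ℂ[X])
    (h : ∀ a b : ℂ, q.eval (a + b) = q.eval a + q.eval b) :
    q = C (q.eval 1) * X := by
  have h0 : q.eval 0 = 0 := by have := h 0 0; simpa using this.symm
  have key : ∀ n : ℕ, q.eval (n : ℂ) = q.eval 1 * n := by
    intro n
    induction n with
    | zero => simpa using h0
    | succ n ih => push_cast; rw [h, ih]; ring
  set r := q - C (q.eval 1) * X with hr
  have hroot : ∀ n : ℕ, r.IsRoot (n : ℂ) := by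
    intro n
    simp only [hr, IsRoot, eval_sub, eval_mul, eval_C, eval_X, key n]
    ring
  have : r = 0 := by
    apply Polynomial.eq_zero_of_infinite_isRoot
    apply Set.Infinite.mono (s := Set.range (Nat.cast : ℕ → ℂ))
    · rintro x ⟨n, rfl⟩; exact hroot n
    · exact Set.infinite_range_of_injective Nat.cast_injective
  rw [← sub_eq_zero]; exact this

lemma aeval_toRingHom_apply (c : ℂ) (q : ℂ[X]) :
    ((Polynomial.aeval c : ℂ[X] →ₐ[ℂ] ℂ)).toRingHom q = q.eval c := by
  simp [Polynomial.coe_aeval_eq_eval]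

/-- A biadditive-in-the-Sheffer-sense polynomial in two variables is linear. -/
lemma additive_poly2_linear (p : Polynomial (Polynomial ℂ))
    (h : ∀ a b c d : ℂ, ev2 (a + b) (c + d) p = ev2 a c p + ev2 b d p) :
    p = C (C ((p.coeff 1).coeff 0)) * X + C (C ((p.coeff 0).coeff 1) * X) := by
  have hF0c : ∀ c : ℂ, ev2 (0:ℂ) c p = (p.coeff 0).eval c := by
    intro c
    unfold ev2
    rw [Polynomial.eval₂_at_zero, aeval_toRingHom_apply]
  -- p.coeff 0 is additive, hence linear
  have hc0 : p.coeff 0 = C ((p.coeff 0).eval 1) * X := by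
    apply additive_poly_linear
    intro c d
    rw [← hF0c, ← hF0c, ← hF0c]
    have := h 0 0 c d
    rwa [add_zero] at this
  have hc0' : (p.coeff 0).coeff 1 = (p.coeff 0).eval 1 := by
    conv_lhs => rw [hc0]
    simp
  have hmapval : ∀ a c : ℂ, (p.map ((Polynomial.aeval c : ℂ[X] →ₐ[ℂ] ℂ)).toRingHom).eval a
      = ev2 a c p := by
    intro a c
    unfold ev2
    rw [Polynomial.eval₂_eq_eval_map]
  have hFa0 : ∀ a : ℂ, ev2 a (0:ℂ) p = ev2 (1:ℂ) (0:ℂ) p * a := by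
    have hq0 : p.map ((Polynomial.aeval (0:ℂ) : ℂ[X] →ₐ[ℂ] ℂ)).toRingHom
        = C (ev2 (1:ℂ) (0:ℂ) p) * X := by
      rw [← hmapval 1 0]
      apply additive_poly_linear
      intro a b
      rw [hmapval, hmapval, hmapval]
      have := h a b 0 0
      rwa [add_zero] at this
    intro a
    rw [← hmapval a 0, hq0, Polynomial.eval_mul, Polynomial.eval_C, Polynomial.eval_X]
  have hsplit : ∀ a c : ℂ, ev2 a c p = ev2 (1:ℂ) (0:ℂ) p * a + ev2 (0:ℂ) c p := by
    intro a c
    have := h a 0 0 c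
    rw [add_zero, zero_add] at this
    rw [this, hFa0]
  have hmapc : ∀ c : ℂ, p.map ((Polynomial.aeval c : ℂ[X] →ₐ[ℂ] ℂ)).toRingHom
      = C (ev2 (1:ℂ) (0:ℂ) p) * X + C (ev2 (0:ℂ) c p) := by
    intro c
    apply Polynomial.funext
    intro a
    rw [hmapval, hsplit, Polynomial.eval_add, Polynomial.eval_mul, Polynomial.eval_C,
      Polynomial.eval_C, Polynomial.eval_X]
  have hcoeff : ∀ (i : ℕ) (c : ℂ), (p.coeff i).eval c
      = ((C (ev2 (1:ℂ) (0:ℂ) p) * X + C (ev2 (0:ℂ) c p) : ℂ[X])).coeff i := by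
    intro i c
    rw [← aeval_toRingHom_apply, ← Polynomial.coeff_map, hmapc]
  have hc1 : p.coeff 1 = C (ev2 (1:ℂ) (0:ℂ) p) := by
    apply Polynomial.funext
    intro c
    rw [hcoeff 1 c]
    simp [Polynomial.coeff_C]
  have hc1' : (p.coeff 1).coeff 0 = ev2 (1:ℂ) (0:ℂ) p := by rw [hc1]; simp
  have hcge : ∀ i : ℕ, 2 ≤ i → p.coeff i = 0 := by
    intro i hi
    apply Polynomial.funext
    intro c
    rw [hcoeff i c]
    rcases Nat.exists_eq_add_of_le hi with ⟨j, rfl⟩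
    simp [Polynomial.coeff_C, Polynomial.coeff_X]
    omega
  have rhs0 : ∀ (a : ℂ[X]) (q : ℂ[X]), (C a * X + C q : ℂ[X][X]).coeff 0 = q := by
    intro a q
    rw [Polynomial.coeff_add, Polynomial.coeff_C_mul, Polynomial.coeff_X_zero,
      Polynomial.coeff_C_zero, mul_zero, zero_add]
  have rhs1 : ∀ (a : ℂ[X]) (q : ℂ[X]), (C a * X + C q : ℂ[X][X]).coeff 1 = a := by
    intro a q
    rw [Polynomial.coeff_add, Polynomial.coeff_C_mul, Polynomial.coeff_X_one,
      Polynomial.coeff_C, mul_one]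
    simp
  have rhsge : ∀ (a : ℂ[X]) (q : ℂ[X]) (j : ℕ), (C a * X + C q : ℂ[X][X]).coeff (j+2) = 0 := by
    intro a q j
    rw [Polynomial.coeff_add, Polynomial.coeff_C_mul, Polynomial.coeff_X, Polynomial.coeff_C]
    simp only [if_neg (by omega : ¬(1 = j + 2)), if_neg (by omega : ¬(j + 2 = 0)), mul_zero,
      add_zero]
  apply Polynomial.ext
  intro i
  match i with
  | 0 => rw [rhs0, hc0']; exact hc0
  | 1 => rw [rhs1, hc1']; exact hc1
  | (j+2) => rw [rhsge, hcge (j+2) (by omega)]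


lemma hom_ev2 {A B : Type*} [CommRing A] [CommRing B] [Algebra ℂ A] [Algebra ℂ B]
    (ψ : A →ₐ[ℂ] B) (W V : A) (p : Polynomial (Polynomial ℂ)) :
    ψ (ev2 W V p) = ev2 (ψ W) (ψ V) p := by
  unfold ev2
  rw [show (ψ (Polynomial.eval₂ (Polynomial.aeval V : ℂ[X] →ₐ[ℂ] A).toRingHom W p) : B)
      = ψ.toRingHom (Polynomial.eval₂ (Polynomial.aeval V : ℂ[X] →ₐ[ℂ] A).toRingHom W p)
      from rfl]
  rw [Polynomial.hom_eval₂]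
  congr 1
  rw [Polynomial.aeval_algHom]
  rfl

noncomputable def ev2RH {R : Type*} [CommRing R] [Algebra ℂ R] (W V : R) :
    Polynomial (Polynomial ℂ) →+* R :=
  Polynomial.eval₂RingHom (Polynomial.aeval V : Polynomial ℂ →ₐ[ℂ] R).toRingHom W

lemma ev2RH_apply {R : Type*} [CommRing R] [Algebra ℂ R] (W V : R)
    (p : Polynomial (Polynomial ℂ)) : ev2RH W V p = ev2 W V p := rfl


/-- if the generating functions `H_i` (in `ℂ[X,Y,S,T][[z]]`) of a family
`P_n(x,t)`, monic of degree `n` in `x`, satisfy `H₃⁻¹ = H₁⁻¹ + H₂⁻¹ − 1`, then the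
generating function has the free Sheffer form `1/(1 + t f(z) − x u(z))` with `u(0) = 0`,
`u'(0) = 1`, `f(0) = 0`. -/
theorem stmt_17 (P : ℕ → Polynomial (Polynomial ℂ))
    (hP0 : P 0 = 1)
    (hmonic : ∀ n, (P n).Monic) (hdeg : ∀ n, (P n).natDegree = n)
    (hsheffer :
      Ring.inverse (PowerSeries.mk fun n =>
          ev2 (MvPolynomial.X (0 : Fin 4) + MvPolynomial.X 1)
            (MvPolynomial.X (2 : Fin 4) + MvPolynomial.X 3) (P n) :
            PowerSeries (MvPolynomial (Fin 4) ℂ)) =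
        Ring.inverse (PowerSeries.mk fun n =>
          ev2 (MvPolynomial.X (0 : Fin 4)) (MvPolynomial.X (2 : Fin 4)) (P n)) +
        Ring.inverse (PowerSeries.mk fun n =>
          ev2 (MvPolynomial.X (1 : Fin 4)) (MvPolynomial.X (3 : Fin 4)) (P n)) - 1) :
    ∃ u f : PowerSeries ℂ,
      PowerSeries.constantCoeff u = 0 ∧ PowerSeries.coeff 1 u = 1 ∧
      PowerSeries.constantCoeff f = 0 ∧
      (1 + PowerSeries.C (Polynomial.C Polynomial.X : Polynomial (Polynomial ℂ)) *
            PowerSeries.map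
              ((Polynomial.C : Polynomial ℂ →+* Polynomial (Polynomial ℂ)).comp
                (Polynomial.C : ℂ →+* Polynomial ℂ)) f
          - PowerSeries.C (Polynomial.X : Polynomial (Polynomial ℂ)) *
            PowerSeries.map
              ((Polynomial.C : Polynomial ℂ →+* Polynomial (Polynomial ℂ)).comp
                (Polynomial.C : ℂ →+* Polynomial ℂ)) u) *
        PowerSeries.mk (fun n => P n) = 1 := by
  classical
  set H : PowerSeries (Polynomial (Polynomial ℂ)) := PowerSeries.mk (fun n => P n) with hH
  have hHu : IsUnit H := by
    rw [PowerSeries.isUnit_iff_constantCoeff]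
    have : PowerSeries.constantCoeff H = P 0 := by
      rw [hH]; exact PowerSeries.constantCoeff_mk
    rw [this, hP0]
    exact isUnit_one
  set G : PowerSeries (Polynomial (Polynomial ℂ)) := Ring.inverse H with hG
  have hGH : G * H = 1 := Ring.inverse_mul_cancel H hHu
  have hHG : H * G = 1 := by rw [mul_comm]; exact hGH
  set g : ℕ → (Polynomial (Polynomial ℂ)) := fun n => PowerSeries.coeff n G with hg
  -- rewrite the three series in the hypothesis as maps of H
  have hmk : ∀ W V : MvPolynomial (Fin 4) ℂ, (PowerSeries.mk fun n => ev2 W V (P n))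
      = PowerSeries.map (ev2RH W V) H := by
    intro W V
    ext n
    rw [PowerSeries.coeff_mk, PowerSeries.coeff_map, hH, PowerSeries.coeff_mk, ev2RH_apply]
  have hinv : ∀ ψ : (Polynomial (Polynomial ℂ)) →+* MvPolynomial (Fin 4) ℂ, Ring.inverse (PowerSeries.map ψ H) = PowerSeries.map ψ G := by
    intro ψ
    apply ringInverse_eq_of_mul_eq_one
    rw [← map_mul, hHG, map_one]
  rw [hmk, hmk, hmk, hinv, hinv, hinv] at hsheffer
  -- coefficientwise
  have hcoeffn : ∀ n : ℕ,
      ev2RH (MvPolynomial.X 0 + MvPolynomial.X 1 : MvPolynomial (Fin 4) ℂ)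
          (MvPolynomial.X 2 + MvPolynomial.X 3 : MvPolynomial (Fin 4) ℂ) (g n)
        = ev2RH (MvPolynomial.X 0 : MvPolynomial (Fin 4) ℂ) (MvPolynomial.X 2) (g n)
          + ev2RH (MvPolynomial.X 1 : MvPolynomial (Fin 4) ℂ) (MvPolynomial.X 3) (g n)
          - (if n = 0 then 1 else 0) := by
    intro n
    have := congrArg (PowerSeries.coeff n) hsheffer
    rwa [map_sub, map_add, PowerSeries.coeff_map, PowerSeries.coeff_map,
      PowerSeries.coeff_map, PowerSeries.coeff_one] at this
  have hg0 : g 0 = 1 := by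
    have := congrArg (PowerSeries.constantCoeff) hGH
    rw [map_mul, map_one] at this
    have hH0 : PowerSeries.constantCoeff H = 1 := by
      rw [hH, PowerSeries.constantCoeff_mk, hP0]
    rw [hH0, mul_one] at this
    show (PowerSeries.coeff 0) G = 1
    rw [PowerSeries.coeff_zero_eq_constantCoeff]
    exact this
  -- additivity of g n for n ≥ 1 under complex evaluation
  have hadd : ∀ n : ℕ, n ≠ 0 → ∀ a b c d : ℂ,
      ev2 (a + b) (c + d) (g n) = ev2 a c (g n) + ev2 b d (g n) := by
    intro n hn a b c d
    have h := hcoeffn n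
    rw [if_neg hn, sub_zero] at h
    have := congrArg (MvPolynomial.aeval (![a, b, c, d] : Fin 4 → ℂ)) h
    rw [map_add, ev2RH_apply, ev2RH_apply, ev2RH_apply, hom_ev2, hom_ev2, hom_ev2] at this
    simpa using this
  -- linear structure of g n
  have hrep : ∀ n : ℕ, n ≠ 0 → g n
      = C (C (((g n).coeff 1).coeff 0)) * X + C (C (((g n).coeff 0).coeff 1) * X) :=
    fun n hn => additive_poly2_linear (g n) (hadd n hn)
  -- g 1 = -(P 1)
  have hg1 : g 1 = -(P 1) := by
    have h1 := congrArg (PowerSeries.coeff 1) hGH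
    rw [PowerSeries.coeff_mul, Finset.Nat.sum_antidiagonal_eq_sum_range_succ_mk] at h1
    simp only [Finset.sum_range_succ, Finset.sum_range_zero, zero_add] at h1
    rw [hH] at h1
    simp only [PowerSeries.coeff_mk, PowerSeries.coeff_one] at h1
    norm_num at h1
    have hg0' : (PowerSeries.constantCoeff) G = 1 := by
      rw [← PowerSeries.coeff_zero_eq_constantCoeff]; exact hg0
    rw [hg0', hP0, one_mul, mul_one] at h1
    have : g 1 = (PowerSeries.coeff 1) G := rfl
    rw [this]
    linear_combination h1
  refine ⟨PowerSeries.mk (fun n => -(((g n).coeff 1).coeff 0)),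
    PowerSeries.mk (fun n => ((g n).coeff 0).coeff 1), ?_, ?_, ?_, ?_⟩
  · rw [PowerSeries.constantCoeff_mk]
    have : g 0 = 1 := hg0
    rw [this]
    simp [Polynomial.coeff_one]
  · rw [PowerSeries.coeff_mk]
    have hP1c : (P 1).coeff 1 = 1 := by
      have h2 := (hmonic 1).coeff_natDegree
      rwa [hdeg 1] at h2
    rw [hg1]
    simp [hP1c]
  · rw [PowerSeries.constantCoeff_mk]
    have : g 0 = 1 := hg0
    rw [this]
    simp [Polynomial.coeff_one]
  · have hEG : (1 + PowerSeries.C (Polynomial.C Polynomial.X : Polynomial (Polynomial ℂ)) *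
            PowerSeries.map
              ((Polynomial.C : Polynomial ℂ →+* Polynomial (Polynomial ℂ)).comp
                (Polynomial.C : ℂ →+* Polynomial ℂ))
              (PowerSeries.mk (fun n => ((g n).coeff 0).coeff 1))
          - PowerSeries.C (Polynomial.X : Polynomial (Polynomial ℂ)) *
            PowerSeries.map
              ((Polynomial.C : Polynomial ℂ →+* Polynomial (Polynomial ℂ)).comp
                (Polynomial.C : ℂ →+* Polynomial ℂ))
              (PowerSeries.mk (fun n => -(((g n).coeff 1).coeff 0)))) = G := by
      apply PowerSeries.ext
      intro n
      rw [map_sub, map_add, PowerSeries.coeff_one, PowerSeries.coeff_C_mul,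
        PowerSeries.coeff_C_mul, PowerSeries.coeff_map, PowerSeries.coeff_map,
        PowerSeries.coeff_mk, PowerSeries.coeff_mk]
      have hgn : (PowerSeries.coeff n) G = g n := rfl
      rw [hgn]
      cases n with
      | zero =>
        rw [if_pos rfl, hg0]
        simp [Polynomial.coeff_one]
      | succ m =>
        rw [if_neg (by omega)]
        set α := ((g (m+1)).coeff 1).coeff 0 with hα
        set β := ((g (m+1)).coeff 0).coeff 1 with hβ
        rw [hrep (m+1) (by omega), ← hα, ← hβ]
        simp only [RingHom.comp_apply, map_neg, map_mul]
        ring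
    rw [hEG]
    exact hGH
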